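/- arXiv:2307.14874 — 3 statements merged into one kernel-verified Lean document; each statement's English description precedes it below -/
import Mathlib

section
/- Let N, n, w be positive natural numbers with n ≤ N, let V be a real N×n matrix, let F be a real N×w matrix, and set C = Vᵀ F. Then the infimum over all vectors α ∈ ℝ^N and β ∈ ℝ^n of the squared Frobenius norm ‖(V + α βᵀ) C − F‖_F² is attained; that is, there exist α* ∈ ℝ^N and β* ∈ ℝ^n such that for all α ∈ ℝ^N and β ∈ ℝ^n, ‖(V + α* β*ᵀ) C − F‖_F² ≤ ‖(V + α βᵀ) C − F‖_F². -/
open Matrix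

/-- Squared Frobenius norm of a real matrix: the sum of the squares of all entries. -/
noncomputable def frobSq {m n : ℕ} (A : Matrix (Fin m) (Fin n) ℝ) : ℝ :=
  ∑ i, ∑ j, (A i j) ^ 2

noncomputable def qsum {k : ℕ} (v : Fin k → ℝ) : ℝ := ∑ i, v i ^ 2

lemma qsum_nonneg {k : ℕ} (v : Fin k → ℝ) : 0 ≤ qsum v :=
  Finset.sum_nonneg fun _ _ => sq_nonneg _

lemma qsum_eq_zero {k : ℕ} {v : Fin k → ℝ} (h : qsum v = 0) (i : Fin k) : v i = 0 := by
  have := (Finset.sum_eq_zero_iff_of_nonneg (fun i _ => sq_nonneg (v i))).1 h i (Finset.mem_univ i)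
  exact pow_eq_zero_iff (two_ne_zero) |>.1 this

lemma qsum_smul {k : ℕ} (s : ℝ) (v : Fin k → ℝ) : qsum (s • v) = s ^ 2 * qsum v := by
  unfold qsum
  rw [Finset.mul_sum]
  exact Finset.sum_congr rfl fun i _ => by simp [mul_pow]

noncomputable def gfun {N w : ℕ} (D : Matrix (Fin N) (Fin w) ℝ)
    (p : (Fin N → ℝ) × (Fin w → ℝ)) : ℝ :=
  ∑ i, ∑ j, (D i j + p.1 i * p.2 j) ^ 2

lemma gfun_continuous {N w : ℕ} (D : Matrix (Fin N) (Fin w) ℝ) : Continuous (gfun D) := by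
  unfold gfun
  fun_prop

lemma gfun_prod {N w : ℕ} (D : Matrix (Fin N) (Fin w) ℝ) (a : Fin N → ℝ) (c : Fin w → ℝ) :
    gfun D (a, c) = ∑ p : Fin N × Fin w, (D p.1 p.2 + a p.1 * c p.2) ^ 2 := by
  rw [gfun, Fintype.sum_prod_type]

lemma qsum_key {N w : ℕ} (D : Matrix (Fin N) (Fin w) ℝ) (α : Fin N → ℝ) (γ : Fin w → ℝ)
    (h : gfun D (α, γ) ≤ gfun D (0, 0)) :
    qsum α * qsum γ ≤ 4 * gfun D (0, 0) := by
  have hm' : gfun D (0, 0) = ∑ p : Fin N × Fin w, (D p.1 p.2) ^ 2 := by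
    rw [gfun_prod]; simp
  have hQ : qsum α * qsum γ = ∑ p : Fin N × Fin w, (α p.1 * γ p.2) ^ 2 := by
    rw [qsum, qsum, Finset.sum_mul_sum, Fintype.sum_prod_type]
    exact Finset.sum_congr rfl fun i _ => Finset.sum_congr rfl fun j _ => by ring
  have hexp : gfun D (α, γ) = gfun D (0, 0)
      + 2 * (∑ p : Fin N × Fin w, D p.1 p.2 * (α p.1 * γ p.2)) + qsum α * qsum γ := by
    rw [gfun_prod, hm', hQ, Finset.mul_sum, ← Finset.sum_add_distrib, ← Finset.sum_add_distrib]
    exact Finset.sum_congr rfl fun p _ => by ring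
  have hcs := Finset.sum_mul_sq_le_sq_mul_sq Finset.univ
    (fun p : Fin N × Fin w => D p.1 p.2) (fun p : Fin N × Fin w => α p.1 * γ p.2)
  rw [← hm', ← hQ] at hcs
  set P := ∑ p : Fin N × Fin w, D p.1 p.2 * (α p.1 * γ p.2) with hP
  have hQnn : 0 ≤ qsum α * qsum γ := mul_nonneg (qsum_nonneg α) (qsum_nonneg γ)
  have hmnn : 0 ≤ gfun D (0, 0) := by
    rw [hm']; exact Finset.sum_nonneg fun _ _ => sq_nonneg _
  nlinarith [hcs, hQnn, hmnn, sq_nonneg (qsum α * qsum γ + 2 * P)]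

lemma norm_le_sqrt_of_qsum_le {k : ℕ} {v : Fin k → ℝ} {B : ℝ} (h : qsum v ≤ B) :
    ‖v‖ ≤ Real.sqrt B := by
  rw [pi_norm_le_iff_of_nonneg (Real.sqrt_nonneg B)]
  intro i
  rw [Real.norm_eq_abs, ← Real.sqrt_sq_eq_abs]
  apply Real.sqrt_le_sqrt
  exact le_trans (Finset.single_le_sum (fun j _ => sq_nonneg (v j)) (Finset.mem_univ i)) h

/-- The ADEIM basis-update optimization problem
`min_{α, β} ‖(V + α βᵀ) C − F‖_F²` with `C = Vᵀ F` attains its infimum. -/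
theorem adeim_update_attained (N n w : ℕ) (hN : 0 < N) (hn : 0 < n) (hw : 0 < w)
    (hnN : n ≤ N) (V : Matrix (Fin N) (Fin n) ℝ) (F : Matrix (Fin N) (Fin w) ℝ) :
    ∃ (αstar : Fin N → ℝ) (βstar : Fin n → ℝ), ∀ (α : Fin N → ℝ) (β : Fin n → ℝ),
      frobSq ((V + vecMulVec αstar βstar) * (Vᵀ * F) - F) ≤
        frobSq ((V + vecMulVec α β) * (Vᵀ * F) - F) := by
  set C : Matrix (Fin n) (Fin w) ℝ := Vᵀ * F with hC
  set D : Matrix (Fin N) (Fin w) ℝ := V * C - F with hD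
  have hfg : ∀ (α : Fin N → ℝ) (β : Fin n → ℝ),
      frobSq ((V + vecMulVec α β) * C - F) = gfun D (α, β ᵥ* C) := by
    intro α β
    unfold frobSq gfun
    refine Finset.sum_congr rfl fun i _ => Finset.sum_congr rfl fun j _ => ?_
    congr 1
    rw [hD]
    simp only [Matrix.add_mul, Matrix.sub_apply, Matrix.add_apply, Matrix.mul_apply,
      vecMulVec_apply, Matrix.vecMul, dotProduct, Finset.mul_sum]
    rw [add_sub_right_comm]
    congr 1
    exact Finset.sum_congr rfl fun k _ => by ring
  set m := gfun D (0, 0) with hm0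
  have hmnn : 0 ≤ m := Finset.sum_nonneg fun _ _ => Finset.sum_nonneg fun _ _ => sq_nonneg _
  set B := 2 * Real.sqrt m with hB
  have hBnn : 0 ≤ B := by positivity
  set W := LinearMap.range (Matrix.vecMulLinear C) with hW
  set K : Set ((Fin N → ℝ) × (Fin w → ℝ)) :=
    {p | qsum p.1 ≤ B ∧ qsum p.2 ≤ B ∧ p.2 ∈ W} with hK
  have hKclosed : IsClosed K := by
    have h1 : IsClosed {p : (Fin N → ℝ) × (Fin w → ℝ) | qsum p.1 ≤ B} :=
      isClosed_le (by unfold qsum; fun_prop) continuous_const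
    have h2 : IsClosed {p : (Fin N → ℝ) × (Fin w → ℝ) | qsum p.2 ≤ B} :=
      isClosed_le (by unfold qsum; fun_prop) continuous_const
    have h3 : IsClosed {p : (Fin N → ℝ) × (Fin w → ℝ) | p.2 ∈ W} :=
      (Submodule.closed_of_finiteDimensional W).preimage continuous_snd
    exact h1.inter (h2.inter h3)
  have hKbdd : Bornology.IsBounded K := by
    apply Bornology.IsBounded.subset (Metric.isBounded_closedBall
      (x := ((0, 0) : (Fin N → ℝ) × (Fin w → ℝ))) (r := Real.sqrt B))
    intro p hp
    rw [Metric.mem_closedBall, show ((0,0) : (Fin N → ℝ) × (Fin w → ℝ)) = 0 from rfl,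
      dist_zero_right, Prod.norm_def]
    exact max_le (norm_le_sqrt_of_qsum_le hp.1) (norm_le_sqrt_of_qsum_le hp.2.1)
  have hKcompact : IsCompact K := Metric.isCompact_of_isClosed_isBounded hKclosed hKbdd
  have h0K : ((0, 0) : (Fin N → ℝ) × (Fin w → ℝ)) ∈ K :=
    ⟨by simpa [qsum] using hBnn, by simpa [qsum] using hBnn, W.zero_mem⟩
  obtain ⟨p₀, hp₀K, hmin⟩ :=
    hKcompact.exists_isMinOn ⟨(0, 0), h0K⟩ ((gfun_continuous D).continuousOn)
  obtain ⟨β₀, hβ₀⟩ := hp₀K.2.2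
  refine ⟨p₀.1, β₀, ?_⟩
  intro α β
  rw [hfg, hfg]
  have hp₀eq : (p₀.1, β₀ ᵥ* C) = p₀ := by
    have : β₀ ᵥ* C = p₀.2 := by rw [← Matrix.vecMulLinear_apply, hβ₀]
    rw [this]
  rw [hp₀eq]
  set γ := β ᵥ* C with hγ
  have hγW : γ ∈ W := ⟨β, Matrix.vecMulLinear_apply C β⟩
  by_cases hcase : m ≤ gfun D (α, γ)
  · exact le_trans (isMinOn_iff.1 hmin (0, 0) h0K) hcase
  · push_neg at hcase
    have hkey := qsum_key D α γ hcase.le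
    by_cases hα : qsum α = 0
    · exfalso
      have : gfun D (α, γ) = m := by
        rw [hm0]
        unfold gfun
        refine Finset.sum_congr rfl fun i _ => Finset.sum_congr rfl fun j _ => ?_
        simp [qsum_eq_zero hα i]
      linarith
    by_cases hγ0 : qsum γ = 0
    · exfalso
      have : gfun D (α, γ) = m := by
        rw [hm0]
        unfold gfun
        refine Finset.sum_congr rfl fun i _ => Finset.sum_congr rfl fun j _ => ?_
        simp [qsum_eq_zero hγ0 j]
      linarith
    · have hαpos : 0 < qsum α := lt_of_le_of_ne (qsum_nonneg α) (Ne.symm hα)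
      have hγpos : 0 < qsum γ := lt_of_le_of_ne (qsum_nonneg γ) (Ne.symm hγ0)
      set s := Real.sqrt (Real.sqrt (qsum γ) / Real.sqrt (qsum α)) with hs
      have hspos : 0 < s :=
        Real.sqrt_pos.2 (div_pos (Real.sqrt_pos.2 hγpos) (Real.sqrt_pos.2 hαpos))
      have hs2 : s ^ 2 = Real.sqrt (qsum γ) / Real.sqrt (qsum α) :=
        Real.sq_sqrt (by positivity)
      have hsqrt4 : Real.sqrt (4 * m) = B := by
        rw [Real.sqrt_mul (by norm_num : (0:ℝ) ≤ 4), hB,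
          show (4:ℝ) = 2 ^ 2 by norm_num, Real.sqrt_sq (by norm_num : (0:ℝ) ≤ 2)]
      have hprod : Real.sqrt (qsum γ) * Real.sqrt (qsum α) ≤ B := by
        rw [← Real.sqrt_mul hγpos.le, ← hsqrt4]
        exact Real.sqrt_le_sqrt (by linarith [hkey])
      have hαα : qsum α = Real.sqrt (qsum α) * Real.sqrt (qsum α) :=
        (Real.mul_self_sqrt hαpos.le).symm
      have hγγ : qsum γ = Real.sqrt (qsum γ) * Real.sqrt (qsum γ) :=
        (Real.mul_self_sqrt hγpos.le).symm
      have hq1 : qsum (s • α) = Real.sqrt (qsum γ) * Real.sqrt (qsum α) := by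
        rw [qsum_smul, hs2]
        field_simp
        linear_combination hαα
      have hq2 : qsum (s⁻¹ • γ) = Real.sqrt (qsum α) * Real.sqrt (qsum γ) := by
        rw [qsum_smul, inv_pow, hs2]
        field_simp
        linear_combination hγγ
      have hmem : ((s • α, s⁻¹ • γ) : (Fin N → ℝ) × (Fin w → ℝ)) ∈ K := by
        refine ⟨?_, ?_, W.smul_mem s⁻¹ hγW⟩
        · rw [hq1]; exact hprod
        · rw [hq2]; rw [mul_comm] at hprod; exact hprod
      have heq : gfun D (s • α, s⁻¹ • γ) = gfun D (α, γ) := by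
        unfold gfun
        refine Finset.sum_congr rfl fun i _ => Finset.sum_congr rfl fun j _ => ?_
        congr 1
        simp only [Pi.smul_apply, smul_eq_mul]
        field_simp
      calc gfun D p₀ ≤ gfun D (s • α, s⁻¹ • γ) := isMinOn_iff.1 hmin _ hmem
        _ = gfun D (α, γ) := heq
end

section
/- Let N, n, w be positive natural numbers, let R be a real N×w matrix and C a real n×w matrix, and let Π be the w×w matrix of the orthogonal projection of ℝ^w onto the row space of C (the span of the rows of C). Then the infimum over all α ∈ ℝ^N and β ∈ ℝ^n of ‖α βᵀ C − R‖_F² equals ‖R‖_F² − σ₁(R Π)², where σ₁(R Π) denotes the largest singular value of R Π. -/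
open Matrix

/-- The largest singular value of a real matrix `R`: the square root of the largest
eigenvalue of `Rᵀ R` (for real matrices, `Rᴴ = Rᵀ`). -/
noncomputable def sigma1 {N w : ℕ} (R : Matrix (Fin N) (Fin w) ℝ) : ℝ :=
  Real.sqrt (⨆ i, (Matrix.isHermitian_conjTranspose_mul_self R).eigenvalues i)

/-- Rayleigh quotient bound: for a Hermitian real matrix, the quadratic form is bounded
by the largest eigenvalue times the squared norm. -/
lemma adeim_rayleigh_bound {w : ℕ} (hw : 0 < w) (A : Matrix (Fin w) (Fin w) ℝ)
    (hA : A.IsHermitian) (x : Fin w → ℝ) :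
    x ⬝ᵥ (A *ᵥ x) ≤ (⨆ i, hA.eigenvalues i) * (∑ j, x j ^ 2) := by
  haveI : Nonempty (Fin w) := ⟨⟨0, hw⟩⟩
  set b := hA.eigenvectorBasis with hb
  set μ := ⨆ i, hA.eigenvalues i with hμ
  have hAt : Aᵀ = A := by
    rw [← Matrix.conjTranspose_eq_transpose_of_trivial, hA]
  have hbA : ∀ i (y : Fin w → ℝ),
      (b i : Fin w → ℝ) ⬝ᵥ (A *ᵥ y) = hA.eigenvalues i * ((b i : Fin w → ℝ) ⬝ᵥ y) := by
    intro i y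
    have hswap : ∀ z : Fin w → ℝ, z ᵥ* A = A *ᵥ z := by
      intro z; rw [← Matrix.mulVec_transpose, hAt]
    rw [Matrix.dotProduct_mulVec, hswap,
      show A *ᵥ (b i : Fin w → ℝ) = hA.eigenvalues i • (b i : Fin w → ℝ) from
        hA.mulVec_eigenvectorBasis i,
      smul_dotProduct, smul_eq_mul]
  have hinner : ∀ (u v : EuclideanSpace ℝ (Fin w)),
      (inner ℝ u v : ℝ) = (u : Fin w → ℝ) ⬝ᵥ (v : Fin w → ℝ) := by
    intro u v
    simp [PiLp.inner_apply, dotProduct, mul_comm]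
  have hrepr : ∀ (y : EuclideanSpace ℝ (Fin w)) i,
      b.repr y i = (b i : Fin w → ℝ) ⬝ᵥ (y : Fin w → ℝ) := by
    intro y i
    rw [b.repr_apply_apply, hinner]
  have hparseval : ∀ (u v : EuclideanSpace ℝ (Fin w)),
      (u : Fin w → ℝ) ⬝ᵥ (v : Fin w → ℝ) = ∑ i, b.repr u i * b.repr v i := by
    intro u v
    calc (u : Fin w → ℝ) ⬝ᵥ (v : Fin w → ℝ) = (inner ℝ u v : ℝ) := (hinner u v).symm
      _ = (inner ℝ (b.repr u) (b.repr v) : ℝ) := (b.repr.inner_map_map u v).symm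
      _ = ∑ i, b.repr u i * b.repr v i := by
          simp only [PiLp.inner_apply, RCLike.inner_apply, conj_trivial]
          exact Finset.sum_congr rfl fun i _ => mul_comm _ _
  have key : x ⬝ᵥ (A *ᵥ x) =
      ∑ i, hA.eigenvalues i * (b.repr (WithLp.toLp 2 x) i)^2 := by
    rw [show x ⬝ᵥ (A *ᵥ x) = _ from hparseval (WithLp.toLp 2 x) (WithLp.toLp 2 (A *ᵥ x))]
    refine Finset.sum_congr rfl fun i _ => ?_
    rw [hrepr, hrepr, WithLp.ofLp_toLp, WithLp.ofLp_toLp, hbA]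
    ring
  have hsumx : ∑ i, (b.repr (WithLp.toLp 2 x) i)^2 = ∑ j, x j ^ 2 := by
    have := hparseval (WithLp.toLp 2 x) (WithLp.toLp 2 x)
    simp only [dotProduct] at this
    simp [← sq] at this
    rw [← this]
  rw [key, ← hsumx, Finset.mul_sum]
  refine Finset.sum_le_sum fun i _ => ?_
  exact mul_le_mul_of_nonneg_right (le_ciSup (Set.Finite.bddAbove (Set.finite_range _)) i)
    (sq_nonneg _)

/-- `‖Mz‖² = zᵀ (Mᴴ M) z`. -/
lemma adeim_quad_aux {N w : ℕ} (M : Matrix (Fin N) (Fin w) ℝ) (z : Fin w → ℝ) :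
    (M *ᵥ z) ⬝ᵥ (M *ᵥ z) = z ⬝ᵥ ((Mᴴ * M) *ᵥ z) := by
  symm
  rw [← Matrix.mulVec_mulVec, Matrix.dotProduct_mulVec,
    Matrix.conjTranspose_eq_transpose_of_trivial, Matrix.vecMul_transpose]

/-- Expansion of the objective function of the ADEIM rank-one update problem. -/
lemma adeim_expand {N n w : ℕ}
    (R : Matrix (Fin N) (Fin w) ℝ) (C : Matrix (Fin n) (Fin w) ℝ)
    (Pr : Matrix (Fin w) (Fin w) ℝ) (hidem : Pr * Pr = Pr)
    (hrange : LinearMap.range Pr.mulVecLin = Submodule.span ℝ (Set.range fun i => C i))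
    (a : Fin N → ℝ) (β : Fin n → ℝ) :
    frobSq (vecMulVec a β * C - R)
      = frobSq R - 2 * (a ⬝ᵥ ((R * Pr) *ᵥ (β ᵥ* C)))
        + (∑ i, a i ^ 2) * (∑ j, (β ᵥ* C) j ^ 2) := by
  set v := β ᵥ* C with hv
  have hvspan : v ∈ Submodule.span ℝ (Set.range fun i => C i) := by
    refine (Submodule.mem_span_range_iff_exists_fun ℝ).mpr ⟨β, ?_⟩
    funext j
    simp [hv, Matrix.vecMul, dotProduct, Finset.sum_apply]
  obtain ⟨u, hu⟩ : v ∈ LinearMap.range Pr.mulVecLin := by rw [hrange]; exact hvspan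
  have hPv : Pr *ᵥ v = v := by
    rw [← hu, Matrix.mulVecLin_apply, Matrix.mulVec_mulVec, hidem]
  have hMv : (R * Pr) *ᵥ v = R *ᵥ v := by
    rw [← Matrix.mulVec_mulVec, hPv]
  have hent : ∀ i j, (vecMulVec a β * C - R) i j = a i * v j - R i j := by
    intro i j
    simp [Matrix.sub_apply, Matrix.mul_apply, Matrix.vecMulVec_apply, hv, Matrix.vecMul,
      dotProduct, Finset.mul_sum, mul_assoc]
  have e1 : ∀ i, ∑ j, (a i * v j - R i j) ^ 2
      = (∑ j, (R i j) ^ 2) - (2 * a i) * (∑ j, R i j * v j) + a i ^ 2 * (∑ j, v j ^ 2) := by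
    intro i
    have h2 : ∀ j, (a i * v j - R i j) ^ 2
        = (R i j) ^ 2 - (2 * a i) * (R i j * v j) + a i ^ 2 * v j ^ 2 := fun j => by ring
    simp_rw [h2, Finset.sum_add_distrib, Finset.sum_sub_distrib, ← Finset.mul_sum]
  rw [hMv]
  unfold frobSq
  simp_rw [hent, e1, Finset.sum_add_distrib, Finset.sum_sub_distrib, ← Finset.sum_mul]
  congr 1
  simp only [dotProduct, Matrix.mulVec, dotProduct, Finset.mul_sum]
  congr 1
  exact Finset.sum_congr rfl fun i _ => Finset.sum_congr rfl fun j _ => by ring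

/-- The optimal value of the ADEIM rank-one update problem: if `Pr` is the matrix of the
orthogonal projection of `ℝ^w` onto the row space of `C` (symmetric, idempotent, with range
equal to the span of the rows of `C`), then the infimum over `α, β` of `‖α βᵀ C − R‖_F²`
equals `‖R‖_F² − σ₁(R Pr)²`. -/
theorem adeim_optimal_value (N n w : ℕ) (hN : 0 < N) (hn : 0 < n) (hw : 0 < w)
    (R : Matrix (Fin N) (Fin w) ℝ) (C : Matrix (Fin n) (Fin w) ℝ)
    (Pr : Matrix (Fin w) (Fin w) ℝ) (hsymm : Prᵀ = Pr) (hidem : Pr * Pr = Pr)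
    (hrange : LinearMap.range Pr.mulVecLin = Submodule.span ℝ (Set.range fun i => C i)) :
    IsGLB {t : ℝ | ∃ (α : Fin N → ℝ) (β : Fin n → ℝ),
        t = frobSq (vecMulVec α β * C - R)} (frobSq R - sigma1 (R * Pr) ^ 2) := by
  haveI : Nonempty (Fin w) := ⟨⟨0, hw⟩⟩
  set M := R * Pr with hM
  have hA : (Mᴴ * M).IsHermitian := Matrix.isHermitian_conjTranspose_mul_self M
  set μ := ⨆ i, hA.eigenvalues i with hμdef
  have hPSD : (Mᴴ * M).PosSemidef := Matrix.posSemidef_conjTranspose_mul_self M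
  have hlam : ∀ i, 0 ≤ hA.eigenvalues i := fun i => hPSD.eigenvalues_nonneg i
  have hle : ∀ i, hA.eigenvalues i ≤ μ := fun i =>
    le_ciSup (Set.Finite.bddAbove (Set.finite_range _)) i
  have hμ0 : 0 ≤ μ := le_trans (hlam (Classical.arbitrary _)) (hle _)
  have hsig : sigma1 M ^ 2 = μ := Real.sq_sqrt hμ0
  have hsq : ∀ (k : ℕ) (z : Fin k → ℝ), z ⬝ᵥ z = ∑ i, z i ^ 2 := by
    intro k z; simp [dotProduct, sq]
  have hquad : ∀ z : Fin w → ℝ, (M *ᵥ z) ⬝ᵥ (M *ᵥ z) = z ⬝ᵥ ((Mᴴ * M) *ᵥ z) :=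
    fun z => adeim_quad_aux M z
  have lower : ∀ (a : Fin N → ℝ) (β : Fin n → ℝ),
      frobSq R - μ ≤ frobSq (vecMulVec a β * C - R) := by
    intro a β
    rw [adeim_expand R C Pr hidem hrange a β]
    set v := β ᵥ* C with hv
    set X := a ⬝ᵥ (M *ᵥ v) with hX
    set P := ∑ i, a i ^ 2 with hP
    set Q := ∑ j, v j ^ 2 with hQ
    have hP0 : 0 ≤ P := Finset.sum_nonneg fun _ _ => sq_nonneg _
    have hQ0 : 0 ≤ Q := Finset.sum_nonneg fun _ _ => sq_nonneg _
    have hK : (M *ᵥ v) ⬝ᵥ (M *ᵥ v) ≤ μ * Q := by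
      rw [hquad]
      exact adeim_rayleigh_bound hw (Mᴴ * M) hA v
    have hX2 : X ^ 2 ≤ P * ((M *ᵥ v) ⬝ᵥ (M *ᵥ v)) := by
      have h := Finset.sum_mul_sq_le_sq_mul_sq Finset.univ a (M *ᵥ v)
      rw [hX, hP, show (M *ᵥ v) ⬝ᵥ (M *ᵥ v) = ∑ i, (M *ᵥ v) i ^ 2 from hsq N (M *ᵥ v)]
      exact h
    have hX2' : X ^ 2 ≤ P * (μ * Q) :=
      le_trans hX2 (mul_le_mul_of_nonneg_left hK hP0)
    nlinarith [sq_nonneg (P * Q - μ), sq_nonneg (P * Q + μ - 2 * X), mul_nonneg hP0 hQ0]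
  have hmem : frobSq R - μ ∈ {t : ℝ | ∃ (α : Fin N → ℝ) (β : Fin n → ℝ),
      t = frobSq (vecMulVec α β * C - R)} := by
    rcases eq_or_lt_of_le hμ0 with h0 | hpos
    · refine ⟨0, 0, ?_⟩
      rw [adeim_expand R C Pr hidem hrange 0 0]
      simp [← h0]
    · obtain ⟨i₀, hi₀⟩ := exists_eq_ciSup_of_finite (f := fun i => hA.eigenvalues i)
      set v : Fin w → ℝ := ((hA.eigenvectorBasis i₀ : EuclideanSpace ℝ (Fin w)) : Fin w → ℝ) with hvdef
      have hAv : (Mᴴ * M) *ᵥ v = μ • v := by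
        rw [show (Mᴴ * M) *ᵥ v = hA.eigenvalues i₀ • v from hA.mulVec_eigenvectorBasis i₀, hi₀]
      have hnorm : ∑ j, v j ^ 2 = 1 := by
        have h1 : ‖hA.eigenvectorBasis i₀‖ = 1 := hA.eigenvectorBasis.orthonormal.1 i₀
        calc ∑ j, v j ^ 2
            = (inner (𝕜 := ℝ) (hA.eigenvectorBasis i₀) (hA.eigenvectorBasis i₀)) := by
              simp only [PiLp.inner_apply, RCLike.inner_apply, conj_trivial]
              exact Finset.sum_congr rfl fun j _ => by rw [pow_two]
          _ = ‖hA.eigenvectorBasis i₀‖ ^ 2 := real_inner_self_eq_norm_sq _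
          _ = 1 := by rw [h1]; norm_num
      have hμne : μ ≠ 0 := ne_of_gt hpos
      have hveq : v = μ⁻¹ • (Pr.mulVecLin (Rᵀ *ᵥ (M *ᵥ v))) := by
        have h3 : Pr.mulVecLin (Rᵀ *ᵥ (M *ᵥ v)) = (Mᴴ * M) *ᵥ v := by
          rw [Matrix.mulVecLin_apply, Matrix.mulVec_mulVec, Matrix.mulVec_mulVec]
          congr 1
          rw [show Mᴴ = Pr * Rᵀ from by
            rw [Matrix.conjTranspose_eq_transpose_of_trivial, hM, Matrix.transpose_mul, hsymm]]
        rw [h3, hAv, smul_smul, inv_mul_cancel₀ hμne, one_smul]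
      have hspan : v ∈ Submodule.span ℝ (Set.range fun i => C i) := by
        rw [hveq]
        exact Submodule.smul_mem _ _ (hrange ▸ LinearMap.mem_range_self _ _)
      obtain ⟨β, hβ⟩ := (Submodule.mem_span_range_iff_exists_fun ℝ).mp hspan
      have hvβ : β ᵥ* C = v := by
        funext j
        rw [← hβ]
        simp [Matrix.vecMul, dotProduct, Finset.sum_apply]
      refine ⟨M *ᵥ v, β, ?_⟩
      rw [adeim_expand R C Pr hidem hrange (M *ᵥ v) β, hvβ, hnorm]
      have hαMv : (M *ᵥ v) ⬝ᵥ (M *ᵥ v) = μ := by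
        rw [hquad, hAv, dotProduct_smul, smul_eq_mul, hsq w v, hnorm, mul_one]
      rw [show ∑ i, (M *ᵥ v) i ^ 2 = μ from by rw [← hsq N (M *ᵥ v), hαMv], hαMv]
      ring
  rw [show frobSq R - sigma1 M ^ 2 = frobSq R - μ from by rw [hsig]]
  constructor
  · rintro t ⟨a, β, rfl⟩
    exact lower a β
  · intro y hy
    exact hy hmem
end

section
/- Let N, n be positive natural numbers with n ≤ N, let V be a real N×n matrix, and let s₁, …, s_{m_s} ∈ {1, …, N} be pairwise distinct indices with corresponding selection matrix S = [e_{s₁}, …, e_{s_{m_s}}] ∈ {0,1}^{N×m_s} built from canonical unit vectors, with complementary selection matrix S̆ ∈ {0,1}^{N×(N−m_s)} corresponding to the indices in {1,…,N} \ {s₁,…,s_{m_s}}. Assume the m_s×n matrix Sᵀ V has rank n. Then for every vector g in the column space of V, the vector q̂ ∈ ℝ^N defined by Sᵀ q̂ = Sᵀ g and S̆ᵀ q̂ = S̆ᵀ V (Sᵀ V)^† Sᵀ g satisfies q̂ = g, where (Sᵀ V)^† denotes the Moore–Penrose pseudoinverse of Sᵀ V. -/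
open Matrix

/-- The Moore–Penrose pseudoinverse of a full-column-rank real matrix `A`,
given by `A† = (Aᵀ A)⁻¹ Aᵀ`. -/
noncomputable def pinv {m n : ℕ} (A : Matrix (Fin m) (Fin n) ℝ) : Matrix (Fin n) (Fin m) ℝ :=
  (Aᵀ * A)⁻¹ * Aᵀ

/-- Exactness of the empirical-interpolation reconstruction: if `S` is the selection matrix
for pairwise distinct sampling indices `s₁, …, s_{m_s}`, `Sc` the complementary selection
matrix, `Sᵀ V` has full column rank `n`, and `g` lies in the column space of `V`, then the
vector `q̂` defined by `Sᵀ q̂ = Sᵀ g` and `Scᵀ q̂ = Scᵀ V (Sᵀ V)† Sᵀ g` equals `g`. -/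
theorem eim_reconstruction_exact (N n ms : ℕ) (hN : 0 < N) (hn : 0 < n) (hnN : n ≤ N)
    (hms : 0 < ms)
    (V : Matrix (Fin N) (Fin n) ℝ)
    (s : Fin ms → Fin N) (hs : Function.Injective s)
    (sc : Fin (N - ms) → Fin N) (hsc : Function.Injective sc)
    (hcompl : Set.range sc = (Set.range s)ᶜ)
    (S : Matrix (Fin N) (Fin ms) ℝ)
    (hS : S = Matrix.of fun i j => if i = s j then (1 : ℝ) else 0)
    (Sc : Matrix (Fin N) (Fin (N - ms)) ℝ)
    (hSc : Sc = Matrix.of fun i j => if i = sc j then (1 : ℝ) else 0)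
    (hrank : (Sᵀ * V).rank = n)
    (g : Fin N → ℝ) (hg : g ∈ LinearMap.range V.mulVecLin)
    (qhat : Fin N → ℝ)
    (h1 : Sᵀ *ᵥ qhat = Sᵀ *ᵥ g)
    (h2 : Scᵀ *ᵥ qhat = (Scᵀ * V * pinv (Sᵀ * V) * Sᵀ) *ᵥ g) :
    qhat = g := by

  obtain ⟨x, hx⟩ := hg
  -- A := Sᵀ * V has full column rank, so AᵀA is invertible
  set A := Sᵀ * V with hA
  have hker : LinearMap.ker A.mulVecLin = ⊥ := by
    have h1' := A.mulVecLin.finrank_range_add_finrank_ker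
    rw [show Module.finrank ℝ (LinearMap.range A.mulVecLin) = n from hrank] at h1'
    simp only [Module.finrank_fin_fun] at h1'
    have : Module.finrank ℝ (LinearMap.ker A.mulVecLin) = 0 := by omega
    exact Submodule.finrank_eq_zero.mp this
  have hkerAtA : LinearMap.ker (Aᵀ * A).mulVecLin = ⊥ := by
    rw [Matrix.ker_mulVecLin_transpose_mul_self]; exact hker
  have hinj : Function.Injective (Aᵀ * A).mulVec := by
    have := LinearMap.ker_eq_bot.mp hkerAtA
    exact this
  have hUnit : IsUnit (Aᵀ * A) := Matrix.mulVec_injective_iff_isUnit.mp hinj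
  have hinv : (Aᵀ * A)⁻¹ * (Aᵀ * A) = 1 :=
    Matrix.nonsing_inv_mul _ ((Matrix.isUnit_iff_isUnit_det _).mp hUnit)
  have hpinv : pinv A * A = 1 := by
    rw [pinv, Matrix.mul_assoc]; exact hinv
  -- Sᵀ g = A *ᵥ x
  have hSg : Sᵀ *ᵥ g = A *ᵥ x := by
    rw [← hx]; simp [hA, Matrix.mulVec_mulVec, Matrix.mulVecLin_apply]
  have hScq : Scᵀ *ᵥ qhat = Scᵀ *ᵥ g := by
    rw [h2, ← hx]
    have : (Scᵀ * V * pinv A * Sᵀ) *ᵥ (V *ᵥ x) = (Scᵀ * V * (pinv A * A)) *ᵥ x := by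
      simp [Matrix.mulVec_mulVec, Matrix.mul_assoc, hA]
    simp only [Matrix.mulVecLin_apply]
    rw [this, hpinv, Matrix.mul_one, ← Matrix.mulVec_mulVec]
  -- componentwise
  have hSel : ∀ (v : Fin N → ℝ) j, (Sᵀ *ᵥ v) j = v (s j) := by
    intro v j
    simp [hS, Matrix.mulVec, dotProduct, Matrix.transpose_apply, eq_comm]
  have hSelc : ∀ (v : Fin N → ℝ) j, (Scᵀ *ᵥ v) j = v (sc j) := by
    intro v j
    simp [hSc, Matrix.mulVec, dotProduct, Matrix.transpose_apply, eq_comm]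
  funext i
  by_cases hi : i ∈ Set.range s
  · obtain ⟨j, rfl⟩ := hi
    have := congrFun h1 j
    rwa [hSel, hSel] at this
  · have : i ∈ Set.range sc := by rw [hcompl]; exact hi
    obtain ⟨j, rfl⟩ := this
    have := congrFun hScq j
    rwa [hSelc, hSelc] at this
end
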